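/- Let m ≥ 0 be an integer and ε ∈ {1,−1}. In the eight real variables (x₂,y₂,z₂,w₂,x₄,y₄,z₄,w₄), set A = x₂ − εi y₂ + i z₂ + ε w₂, B = x₄ + εi y₄ + i z₄ − ε w₄, and p = A^{m+1}·B (a complex-coefficient polynomial function on ℝ⁸). Then, identically on ℝ⁸: −(z₂+εy₂)(∂p/∂z₄ + ε ∂p/∂y₄) + (z₄−εy₄)(∂p/∂z₂ − ε ∂p/∂y₂) − (w₂−εx₂)(∂p/∂w₄ − ε ∂p/∂x₄) + (w₄+εx₄)(∂p/∂w₂ + ε ∂p/∂x₂) + (ε/(2π))(∂²p/∂y₂∂z₄ + ∂²p/∂z₂∂y₄ − ∂²p/∂x₂∂w₄ − ∂²p/∂w₂∂x₄) = 2·[ (m+1)·((x₄+iz₄)² + (y₄+iw₄)²) − (x₂+iz₂)² − (y₂+iw₂)² ]·A^m. -/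

import Mathlib

open Complex Real

/-- `A = x₂ − εi y₂ + i z₂ + ε w₂`. -/
noncomputable def Apoly (ε : ℝ) (x₂ y₂ z₂ w₂ : ℝ) : ℂ :=
  (x₂ : ℂ) - (ε : ℂ) * Complex.I * (y₂ : ℂ) + Complex.I * (z₂ : ℂ) + (ε : ℂ) * (w₂ : ℂ)

/-- `B = x₄ + εi y₄ + i z₄ − ε w₄`. -/
noncomputable def Bpoly (ε : ℝ) (x₄ y₄ z₄ w₄ : ℝ) : ℂ :=
  (x₄ : ℂ) + (ε : ℂ) * Complex.I * (y₄ : ℂ) + Complex.I * (z₄ : ℂ) - (ε : ℂ) * (w₄ : ℂ)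

/-- `p = A^{m+1} · B`, a complex-coefficient polynomial function on `ℝ⁸`. -/
noncomputable def pPoly (m : ℕ) (ε : ℝ) (x₂ y₂ z₂ w₂ x₄ y₄ z₄ w₄ : ℝ) : ℂ :=
  (Apoly ε x₂ y₂ z₂ w₂) ^ (m + 1) * Bpoly ε x₄ y₄ z₄ w₄

lemma hasDerivAt_aff (c d : ℂ) (t : ℝ) : HasDerivAt (fun s : ℝ => c + d * (s:ℂ)) d t := by
  have h : HasDerivAt (fun s : ℝ => (s:ℂ)) 1 t := by
    simpa using (hasDerivAt_id t).ofReal_comp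
  simpa using (h.const_mul d).const_add c

lemma hasDerivAt_aff_pow (c d : ℂ) (n : ℕ) (t : ℝ) :
    HasDerivAt (fun s : ℝ => (c + d * (s:ℂ))^n) ((n:ℂ) * (c + d*(t:ℂ))^(n-1) * d) t := by
  induction n with
  | zero => simpa using hasDerivAt_const t (1:ℂ)
  | succ k ih =>
    have h := ih.mul (hasDerivAt_aff c d t)
    have heq : (fun s : ℝ => (c + d * (s:ℂ))^k * (c + d * (s:ℂ)))
        = fun s : ℝ => (c + d * (s:ℂ))^(k+1) := by
      funext s; rw [pow_succ]
    simp only [Pi.mul_def] at h; rw [heq] at h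
    refine h.congr_deriv ?_
    rcases k with _|j
    · simp
    · push_cast; rw [pow_succ]; try ring

lemma deriv_aff_pow_mul (c d e : ℂ) (n : ℕ) (t : ℝ) :
    deriv (fun s : ℝ => (c + d * (s:ℂ))^n * e) t
      = (n:ℂ) * (c + d*(t:ℂ))^(n-1) * d * e :=
  ((hasDerivAt_aff_pow c d n t).mul_const e).deriv

section derivs

variable (m : ℕ) (ε x₂ y₂ z₂ w₂ x₄ y₄ z₄ w₄ : ℝ)

-- first derivatives in the B-variables
lemma d_x4 : deriv (fun x₄' : ℝ => pPoly m ε x₂ y₂ z₂ w₂ x₄' y₄ z₄ w₄) x₄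
    = (Apoly ε x₂ y₂ z₂ w₂)^(m+1) := by
  have h : (fun x₄' : ℝ => pPoly m ε x₂ y₂ z₂ w₂ x₄' y₄ z₄ w₄)
      = fun s : ℝ => (((ε:ℂ)*Complex.I*y₄ + Complex.I*z₄ - (ε:ℂ)*w₄) + 1 * (s:ℂ))^1
          * (Apoly ε x₂ y₂ z₂ w₂)^(m+1) := by
    funext s; simp only [pPoly, Bpoly]; try ring
  rw [h, deriv_aff_pow_mul]; try push_cast; try ring

lemma d_y4 : deriv (fun y₄' : ℝ => pPoly m ε x₂ y₂ z₂ w₂ x₄ y₄' z₄ w₄) y₄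
    = (ε:ℂ) * Complex.I * (Apoly ε x₂ y₂ z₂ w₂)^(m+1) := by
  have h : (fun y₄' : ℝ => pPoly m ε x₂ y₂ z₂ w₂ x₄ y₄' z₄ w₄)
      = fun s : ℝ => (((x₄:ℂ) + Complex.I*z₄ - (ε:ℂ)*w₄) + ((ε:ℂ)*Complex.I) * (s:ℂ))^1
          * (Apoly ε x₂ y₂ z₂ w₂)^(m+1) := by
    funext s; simp only [pPoly, Bpoly]; try ring
  rw [h, deriv_aff_pow_mul]; try push_cast; try ring

lemma d_z4 : deriv (fun z₄' : ℝ => pPoly m ε x₂ y₂ z₂ w₂ x₄ y₄ z₄' w₄) z₄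
    = Complex.I * (Apoly ε x₂ y₂ z₂ w₂)^(m+1) := by
  have h : (fun z₄' : ℝ => pPoly m ε x₂ y₂ z₂ w₂ x₄ y₄ z₄' w₄)
      = fun s : ℝ => (((x₄:ℂ) + (ε:ℂ)*Complex.I*y₄ - (ε:ℂ)*w₄) + Complex.I * (s:ℂ))^1
          * (Apoly ε x₂ y₂ z₂ w₂)^(m+1) := by
    funext s; simp only [pPoly, Bpoly]; try ring
  rw [h, deriv_aff_pow_mul]; try push_cast; try ring

lemma d_w4 : deriv (fun w₄' : ℝ => pPoly m ε x₂ y₂ z₂ w₂ x₄ y₄ z₄ w₄') w₄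
    = -(ε:ℂ) * (Apoly ε x₂ y₂ z₂ w₂)^(m+1) := by
  have h : (fun w₄' : ℝ => pPoly m ε x₂ y₂ z₂ w₂ x₄ y₄ z₄ w₄')
      = fun s : ℝ => (((x₄:ℂ) + (ε:ℂ)*Complex.I*y₄ + Complex.I*z₄) + (-(ε:ℂ)) * (s:ℂ))^1
          * (Apoly ε x₂ y₂ z₂ w₂)^(m+1) := by
    funext s; simp only [pPoly, Bpoly]; try ring
  rw [h, deriv_aff_pow_mul]; try push_cast; try ring

-- first derivatives in the A-variables
lemma d_x2 : deriv (fun x₂' : ℝ => pPoly m ε x₂' y₂ z₂ w₂ x₄ y₄ z₄ w₄) x₂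
    = ((m:ℂ)+1) * (Apoly ε x₂ y₂ z₂ w₂)^m * Bpoly ε x₄ y₄ z₄ w₄ := by
  have h : (fun x₂' : ℝ => pPoly m ε x₂' y₂ z₂ w₂ x₄ y₄ z₄ w₄)
      = fun s : ℝ => ((-(ε:ℂ)*Complex.I*y₂ + Complex.I*z₂ + (ε:ℂ)*w₂) + 1 * (s:ℂ))^(m+1)
          * Bpoly ε x₄ y₄ z₄ w₄ := by
    funext s; simp only [pPoly, Apoly]; try ring
  rw [h, deriv_aff_pow_mul, Nat.add_sub_cancel]
  have hb : (-(ε:ℂ)*Complex.I*y₂ + Complex.I*z₂ + (ε:ℂ)*w₂) + 1 * (x₂:ℂ)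
      = Apoly ε x₂ y₂ z₂ w₂ := by simp only [Apoly]; try ring
  rw [hb]; try push_cast; try ring

lemma d_y2 : deriv (fun y₂' : ℝ => pPoly m ε x₂ y₂' z₂ w₂ x₄ y₄ z₄ w₄) y₂
    = -((m:ℂ)+1) * (ε:ℂ) * Complex.I * (Apoly ε x₂ y₂ z₂ w₂)^m * Bpoly ε x₄ y₄ z₄ w₄ := by
  have h : (fun y₂' : ℝ => pPoly m ε x₂ y₂' z₂ w₂ x₄ y₄ z₄ w₄)
      = fun s : ℝ => (((x₂:ℂ) + Complex.I*z₂ + (ε:ℂ)*w₂) + (-(ε:ℂ)*Complex.I) * (s:ℂ))^(m+1)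
          * Bpoly ε x₄ y₄ z₄ w₄ := by
    funext s; simp only [pPoly, Apoly]; try ring
  rw [h, deriv_aff_pow_mul, Nat.add_sub_cancel]
  have hb : ((x₂:ℂ) + Complex.I*z₂ + (ε:ℂ)*w₂) + (-(ε:ℂ)*Complex.I) * (y₂:ℂ)
      = Apoly ε x₂ y₂ z₂ w₂ := by simp only [Apoly]; try ring
  rw [hb]; try push_cast; try ring

lemma d_z2 : deriv (fun z₂' : ℝ => pPoly m ε x₂ y₂ z₂' w₂ x₄ y₄ z₄ w₄) z₂
    = ((m:ℂ)+1) * Complex.I * (Apoly ε x₂ y₂ z₂ w₂)^m * Bpoly ε x₄ y₄ z₄ w₄ := by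
  have h : (fun z₂' : ℝ => pPoly m ε x₂ y₂ z₂' w₂ x₄ y₄ z₄ w₄)
      = fun s : ℝ => (((x₂:ℂ) - (ε:ℂ)*Complex.I*y₂ + (ε:ℂ)*w₂) + Complex.I * (s:ℂ))^(m+1)
          * Bpoly ε x₄ y₄ z₄ w₄ := by
    funext s; simp only [pPoly, Apoly]; try ring
  rw [h, deriv_aff_pow_mul, Nat.add_sub_cancel]
  have hb : ((x₂:ℂ) - (ε:ℂ)*Complex.I*y₂ + (ε:ℂ)*w₂) + Complex.I * (z₂:ℂ)
      = Apoly ε x₂ y₂ z₂ w₂ := by simp only [Apoly]; try ring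
  rw [hb]; try push_cast; try ring

lemma d_w2 : deriv (fun w₂' : ℝ => pPoly m ε x₂ y₂ z₂ w₂' x₄ y₄ z₄ w₄) w₂
    = ((m:ℂ)+1) * (ε:ℂ) * (Apoly ε x₂ y₂ z₂ w₂)^m * Bpoly ε x₄ y₄ z₄ w₄ := by
  have h : (fun w₂' : ℝ => pPoly m ε x₂ y₂ z₂ w₂' x₄ y₄ z₄ w₄)
      = fun s : ℝ => (((x₂:ℂ) - (ε:ℂ)*Complex.I*y₂ + Complex.I*z₂) + (ε:ℂ) * (s:ℂ))^(m+1)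
          * Bpoly ε x₄ y₄ z₄ w₄ := by
    funext s; simp only [pPoly, Apoly]; try ring
  rw [h, deriv_aff_pow_mul, Nat.add_sub_cancel]
  have hb : ((x₂:ℂ) - (ε:ℂ)*Complex.I*y₂ + Complex.I*z₂) + (ε:ℂ) * (w₂:ℂ)
      = Apoly ε x₂ y₂ z₂ w₂ := by simp only [Apoly]; try ring
  rw [hb]; try push_cast; try ring

-- second derivatives
lemma dd_y2z4 : deriv (fun y₂' : ℝ =>
      deriv (fun z₄' : ℝ => pPoly m ε x₂ y₂' z₂ w₂ x₄ y₄ z₄' w₄) z₄) y₂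
    = -((m:ℂ)+1) * (ε:ℂ) * Complex.I * Complex.I * (Apoly ε x₂ y₂ z₂ w₂)^m := by
  have h : (fun y₂' : ℝ => deriv (fun z₄' : ℝ => pPoly m ε x₂ y₂' z₂ w₂ x₄ y₄ z₄' w₄) z₄)
      = fun s : ℝ => (((x₂:ℂ) + Complex.I*z₂ + (ε:ℂ)*w₂) + (-(ε:ℂ)*Complex.I) * (s:ℂ))^(m+1)
          * Complex.I := by
    funext s; rw [d_z4]
    have hb : Apoly ε x₂ s z₂ w₂
        = ((x₂:ℂ) + Complex.I*z₂ + (ε:ℂ)*w₂) + (-(ε:ℂ)*Complex.I) * (s:ℂ) := by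
      simp only [Apoly]; try ring
    rw [hb]; try ring
  rw [h, deriv_aff_pow_mul, Nat.add_sub_cancel]
  have hb : ((x₂:ℂ) + Complex.I*z₂ + (ε:ℂ)*w₂) + (-(ε:ℂ)*Complex.I) * (y₂:ℂ)
      = Apoly ε x₂ y₂ z₂ w₂ := by simp only [Apoly]; try ring
  rw [hb]; try push_cast; try ring

lemma dd_z2y4 : deriv (fun z₂' : ℝ =>
      deriv (fun y₄' : ℝ => pPoly m ε x₂ y₂ z₂' w₂ x₄ y₄' z₄ w₄) y₄) z₂
    = ((m:ℂ)+1) * (ε:ℂ) * Complex.I * Complex.I * (Apoly ε x₂ y₂ z₂ w₂)^m := by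
  have h : (fun z₂' : ℝ => deriv (fun y₄' : ℝ => pPoly m ε x₂ y₂ z₂' w₂ x₄ y₄' z₄ w₄) y₄)
      = fun s : ℝ => (((x₂:ℂ) - (ε:ℂ)*Complex.I*y₂ + (ε:ℂ)*w₂) + Complex.I * (s:ℂ))^(m+1)
          * ((ε:ℂ) * Complex.I) := by
    funext s; rw [d_y4]
    have hb : Apoly ε x₂ y₂ s w₂
        = ((x₂:ℂ) - (ε:ℂ)*Complex.I*y₂ + (ε:ℂ)*w₂) + Complex.I * (s:ℂ) := by
      simp only [Apoly]; try ring
    rw [hb]; try ring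
  rw [h, deriv_aff_pow_mul, Nat.add_sub_cancel]
  have hb : ((x₂:ℂ) - (ε:ℂ)*Complex.I*y₂ + (ε:ℂ)*w₂) + Complex.I * (z₂:ℂ)
      = Apoly ε x₂ y₂ z₂ w₂ := by simp only [Apoly]; try ring
  rw [hb]; try push_cast; try ring

lemma dd_x2w4 : deriv (fun x₂' : ℝ =>
      deriv (fun w₄' : ℝ => pPoly m ε x₂' y₂ z₂ w₂ x₄ y₄ z₄ w₄') w₄) x₂
    = -((m:ℂ)+1) * (ε:ℂ) * (Apoly ε x₂ y₂ z₂ w₂)^m := by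
  have h : (fun x₂' : ℝ => deriv (fun w₄' : ℝ => pPoly m ε x₂' y₂ z₂ w₂ x₄ y₄ z₄ w₄') w₄)
      = fun s : ℝ => ((-(ε:ℂ)*Complex.I*y₂ + Complex.I*z₂ + (ε:ℂ)*w₂) + 1 * (s:ℂ))^(m+1)
          * (-(ε:ℂ)) := by
    funext s; rw [d_w4]
    have hb : Apoly ε s y₂ z₂ w₂
        = (-(ε:ℂ)*Complex.I*y₂ + Complex.I*z₂ + (ε:ℂ)*w₂) + 1 * (s:ℂ) := by
      simp only [Apoly]; try ring
    rw [hb]; try ring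
  rw [h, deriv_aff_pow_mul, Nat.add_sub_cancel]
  have hb : (-(ε:ℂ)*Complex.I*y₂ + Complex.I*z₂ + (ε:ℂ)*w₂) + 1 * (x₂:ℂ)
      = Apoly ε x₂ y₂ z₂ w₂ := by simp only [Apoly]; try ring
  rw [hb]; try push_cast; try ring

lemma dd_w2x4 : deriv (fun w₂' : ℝ =>
      deriv (fun x₄' : ℝ => pPoly m ε x₂ y₂ z₂ w₂' x₄' y₄ z₄ w₄) x₄) w₂
    = ((m:ℂ)+1) * (ε:ℂ) * (Apoly ε x₂ y₂ z₂ w₂)^m := by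
  have h : (fun w₂' : ℝ => deriv (fun x₄' : ℝ => pPoly m ε x₂ y₂ z₂ w₂' x₄' y₄ z₄ w₄) x₄)
      = fun s : ℝ => (((x₂:ℂ) - (ε:ℂ)*Complex.I*y₂ + Complex.I*z₂) + (ε:ℂ) * (s:ℂ))^(m+1)
          * 1 := by
    funext s; rw [d_x4]
    have hb : Apoly ε x₂ y₂ z₂ s
        = ((x₂:ℂ) - (ε:ℂ)*Complex.I*y₂ + Complex.I*z₂) + (ε:ℂ) * (s:ℂ) := by
      simp only [Apoly]; try ring
    rw [hb]; try ring
  rw [h, deriv_aff_pow_mul, Nat.add_sub_cancel]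
  have hb : ((x₂:ℂ) - (ε:ℂ)*Complex.I*y₂ + Complex.I*z₂) + (ε:ℂ) * (w₂:ℂ)
      = Apoly ε x₂ y₂ z₂ w₂ := by simp only [Apoly]; try ring
  rw [hb]; try push_cast; try ring

end derivs

/-- The action of the lowering/raising operator `L^ε` of `U(2)` in the Fock model of the Weil
representation on `φ^{−ε}_{m+1} ⊗ φ^{ε}_1`, at the level of the polynomial `p = A^{m+1}B`. -/
theorem lowering_operator_identity (m : ℕ) (ε : ℝ) (hε : ε = 1 ∨ ε = -1)
    (x₂ y₂ z₂ w₂ x₄ y₄ z₄ w₄ : ℝ) :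
    -(((z₂ + ε * y₂ : ℝ) : ℂ)) *
        (deriv (fun z₄' : ℝ => pPoly m ε x₂ y₂ z₂ w₂ x₄ y₄ z₄' w₄) z₄ +
          (ε : ℂ) * deriv (fun y₄' : ℝ => pPoly m ε x₂ y₂ z₂ w₂ x₄ y₄' z₄ w₄) y₄) +
      (((z₄ - ε * y₄ : ℝ) : ℂ)) *
        (deriv (fun z₂' : ℝ => pPoly m ε x₂ y₂ z₂' w₂ x₄ y₄ z₄ w₄) z₂ -
          (ε : ℂ) * deriv (fun y₂' : ℝ => pPoly m ε x₂ y₂' z₂ w₂ x₄ y₄ z₄ w₄) y₂) -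
      (((w₂ - ε * x₂ : ℝ) : ℂ)) *
        (deriv (fun w₄' : ℝ => pPoly m ε x₂ y₂ z₂ w₂ x₄ y₄ z₄ w₄') w₄ -
          (ε : ℂ) * deriv (fun x₄' : ℝ => pPoly m ε x₂ y₂ z₂ w₂ x₄' y₄ z₄ w₄) x₄) +
      (((w₄ + ε * x₄ : ℝ) : ℂ)) *
        (deriv (fun w₂' : ℝ => pPoly m ε x₂ y₂ z₂ w₂' x₄ y₄ z₄ w₄) w₂ +
          (ε : ℂ) * deriv (fun x₂' : ℝ => pPoly m ε x₂' y₂ z₂ w₂ x₄ y₄ z₄ w₄) x₂) +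
      ((ε : ℂ) / (2 * (π : ℂ))) *
        (deriv (fun y₂' : ℝ =>
            deriv (fun z₄' : ℝ => pPoly m ε x₂ y₂' z₂ w₂ x₄ y₄ z₄' w₄) z₄) y₂ +
          deriv (fun z₂' : ℝ =>
            deriv (fun y₄' : ℝ => pPoly m ε x₂ y₂ z₂' w₂ x₄ y₄' z₄ w₄) y₄) z₂ -
          deriv (fun x₂' : ℝ =>
            deriv (fun w₄' : ℝ => pPoly m ε x₂' y₂ z₂ w₂ x₄ y₄ z₄ w₄') w₄) x₂ -
          deriv (fun w₂' : ℝ =>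
            deriv (fun x₄' : ℝ => pPoly m ε x₂ y₂ z₂ w₂' x₄' y₄ z₄ w₄) x₄) w₂) =
      2 * (((m : ℂ) + 1) * (((x₄ : ℂ) + Complex.I * (z₄ : ℂ)) ^ 2 +
              ((y₄ : ℂ) + Complex.I * (w₄ : ℂ)) ^ 2) -
            ((x₂ : ℂ) + Complex.I * (z₂ : ℂ)) ^ 2 -
            ((y₂ : ℂ) + Complex.I * (w₂ : ℂ)) ^ 2) *
        (Apoly ε x₂ y₂ z₂ w₂) ^ m := by
  rw [d_z4, d_y4, d_z2, d_y2, d_w4, d_x4, d_w2, d_x2, dd_y2z4, dd_z2y4, dd_x2w4, dd_w2x4]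
  have hsq : Complex.I * Complex.I = -1 := by
    simp [pow_two]
  simp only [Apoly, Bpoly, pow_succ]
  rcases hε with rfl | rfl <;> push_cast
  · linear_combination (2 * ((y₂:ℂ)^2 + (w₂:ℂ)^2 - ((m:ℂ)+1)*((y₄:ℂ)^2+(w₄:ℂ)^2)) *
      ((z₂:ℂ)*Complex.I - (y₂:ℂ)*Complex.I + (x₂:ℂ) + (w₂:ℂ))^m) * hsq
  · linear_combination (2 * ((y₂:ℂ)^2 + (w₂:ℂ)^2 - ((m:ℂ)+1)*((y₄:ℂ)^2+(w₄:ℂ)^2)) *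
      ((z₂:ℂ)*Complex.I + (y₂:ℂ)*Complex.I + ((x₂:ℂ) - (w₂:ℂ)))^m) * hsq
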